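/- If a graph G has three pairwise distinct closed non-backtracking walks of the same length l based at a common vertex, then Abl(G) ≤ 4l. -/

import Mathlib

/-- A multigraph: vertices, edges, and tail/head maps (loops and parallel
edges allowed). -/
structure MGraph where
  V : Type
  E : Type
  tail : E → V
  head : E → V

namespace MGraph

variable (G : MGraph)

/-- Directed edges: an edge together with an orientation. -/
abbrev Dir := G.E × Bool

/-- The tail of a directed edge. -/
def dtail : G.Dir → G.V := fun d => if d.2 then G.tail d.1 else G.head d.1

/-- The head of a directed edge. -/
def dhead : G.Dir → G.V := fun d => if d.2 then G.head d.1 else G.tail d.1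

/-- The inverse (reversal) of a directed edge. -/
def dinv : G.Dir → G.Dir := fun d => (d.1, !d.2)

/-- A walk is a list of directed edges in which the head of each directed edge
is the tail of the next one. -/
def IsWalk (w : List G.Dir) : Prop :=
  w.Chain' (fun a b => G.dhead a = G.dtail b)

/-- A walk is non-backtracking if no directed edge is immediately followed by
its inverse. -/
def NonBack (w : List G.Dir) : Prop :=
  w.Chain' (fun a b => b ≠ G.dinv a)

/-- The starting vertex of a (nonempty) walk. -/
def wstart (w : List G.Dir) : Option G.V := w.head?.map G.dtail

/-- The terminating vertex of a (nonempty) walk. -/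
def wend (w : List G.Dir) : Option G.V := w.getLast?.map G.dhead

/-- A walk is closed if it is nontrivial and its endpoints coincide. -/
def Closed (w : List G.Dir) : Prop := w ≠ [] ∧ G.wstart w = G.wend w

/-- The number of times the directed edge `d` is traversed by the walk `w`. -/
noncomputable def cnt (w : List G.Dir) (d : G.Dir) : ℕ :=
  letI := Classical.decEq G.Dir
  w.count d

/-- A walk is edge neutral if it traverses each edge the same number of times
in each direction. -/
def EdgeNeutral (w : List G.Dir) : Prop :=
  ∀ e : G.E, G.cnt w (e, true) = G.cnt w (e, false)

/-- The girth: the minimal length of a nontrivial closed non-backtracking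
walk (`⊤` if none exists). -/
noncomputable def girth : ℕ∞ :=
  sInf {n : ℕ∞ | ∃ w : List G.Dir,
    G.IsWalk w ∧ G.NonBack w ∧ G.Closed w ∧ n = w.length}

/-- The abelian girth: the minimal length of a nontrivial closed
non-backtracking edge-neutral walk (`⊤` if none exists). -/
noncomputable def ablGirth : ℕ∞ :=
  sInf {n : ℕ∞ | ∃ w : List G.Dir,
    G.IsWalk w ∧ G.NonBack w ∧ G.Closed w ∧ G.EdgeNeutral w ∧ n = w.length}

/-- The degree of a vertex: the number of directed edges with tail `v`
(so a loop contributes 2). -/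
noncomputable def deg (v : G.V) : ℕ := Nat.card {d : G.Dir // G.dtail d = v}

/-- Adjacency via a directed edge. -/
def adj (u v : G.V) : Prop := ∃ d : G.Dir, G.dtail d = u ∧ G.dhead d = v

/-- A graph is connected if it is nonempty and any two vertices are joined by
a walk. -/
def Connected : Prop :=
  Nonempty G.V ∧ ∀ u v : G.V, Relation.ReflTransGen G.adj u v

/-- The Euler characteristic `|V| - |E|`. -/
noncomputable def eulerChar : ℤ := (Nat.card G.V : ℤ) - (Nat.card G.E : ℤ)

/-- A walk traverses each edge at most once (in either direction). -/
def EdgesDistinct (w : List G.Dir) : Prop :=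
  ∀ e : G.E, G.cnt w (e, true) + G.cnt w (e, false) ≤ 1

/-- The edge `e` occurs in the walk `w` (in some direction). -/
def edgeIn (w : List G.Dir) (e : G.E) : Prop := (e, true) ∈ w ∨ (e, false) ∈ w

/-- The vertex `x` is visited by the walk `w`. -/
def vtxIn (w : List G.Dir) (x : G.V) : Prop :=
  (∃ d ∈ w, G.dtail d = x) ∨ (∃ d ∈ w, G.dhead d = x)

/-- A cycle based at `v`: a nontrivial strongly closed non-backtracking walk
from `v` to `v` traversing each edge at most once. -/
def IsCycleAt (v : G.V) (w : List G.Dir) : Prop :=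
  G.IsWalk w ∧ G.NonBack w ∧ G.wstart w = some v ∧ G.wend w = some v ∧
    G.EdgesDistinct w ∧
    (∀ a b : G.Dir, w.head? = some a → w.getLast? = some b → a ≠ G.dinv b)

/-- A path from `u` to `v`: a non-backtracking walk from `u` to `v`
traversing each edge at most once. -/
def IsPathBetween (u v : G.V) (w : List G.Dir) : Prop :=
  G.IsWalk w ∧ G.NonBack w ∧ G.wstart w = some u ∧ G.wend w = some v ∧
    G.EdgesDistinct w

/-- One elementary reduction step on a walk: deleting a reversal, i.e. an
adjacent pair consisting of a directed edge and its inverse. -/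
def RStep (w w' : List G.Dir) : Prop :=
  ∃ (pre suf : List G.Dir) (d : G.Dir),
    w = pre ++ d :: G.dinv d :: suf ∧ w' = pre ++ suf

end MGraph

namespace WordAux

open FreeGroup List

variable {α : Type*} [DecidableEq α]

/-- Reduced word: no adjacent cancelling pair. -/
def Rdc (L : List (α × Bool)) : Prop :=
  L.Chain' (fun a b => b ≠ (a.1, !a.2))

theorem rdc_no_step {L M : List (α × Bool)} (h : Rdc L) (s : FreeGroup.Red.Step L M) : False := by
  cases s with
  | @not L₁ L₂ x b =>
    rw [Rdc, List.Chain', List.isChain_append] at h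
    obtain ⟨-, h2, -⟩ := h
    rw [List.isChain_cons_cons] at h2
    exact h2.1 rfl

theorem rdc_red_eq {L M : List (α × Bool)} (h : Rdc L) (r : FreeGroup.Red L M) : M = L := by
  rcases Relation.ReflTransGen.cases_head r with rfl | ⟨c, hc, -⟩
  · rfl
  · exact absurd hc (fun s => rdc_no_step h s)

theorem rdc_reduce_eq {L : List (α × Bool)} (h : Rdc L) : reduce L = L :=
  rdc_red_eq h reduce.red

theorem exists_decomp_of_not_rdc : ∀ {L : List (α × Bool)}, ¬ Rdc L →
    ∃ (L₁ L₂ : List (α × Bool)) (x : α) (b : Bool),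
      L = L₁ ++ (x, b) :: (x, !b) :: L₂
  | [], h => absurd List.isChain_nil h
  | [a], h => absurd (List.isChain_singleton a) h
  | a :: c :: t, h => by
    rw [Rdc, List.Chain', List.isChain_cons_cons] at h
    push_neg at h
    by_cases hac : c = (a.1, !a.2)
    · exact ⟨[], t, a.1, a.2, by simp [hac]⟩
    · obtain ⟨L₁, L₂, x, b, hd⟩ := exists_decomp_of_not_rdc (fun hr => (h hac) hr)
      exact ⟨a :: L₁, L₂, x, b, by simp [hd]⟩

theorem rdc_reduce (L : List (α × Bool)) : Rdc (reduce L) := by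
  by_contra h
  obtain ⟨L₁, L₂, x, b, hd⟩ := exists_decomp_of_not_rdc h
  exact reduce.not hd

theorem invRev_append (L₁ L₂ : List (α × Bool)) :
    invRev (L₁ ++ L₂) = invRev L₂ ++ invRev L₁ := by
  simp [invRev]

theorem invRev_singleton (x : α × Bool) : invRev [x] = [(x.1, !x.2)] := by
  simp [invRev]

/-- Cancellation lemma: concatenating two reduced words reduces by perfect
cancellation of a suffix of the first against a prefix of the second. -/
theorem cancel_aux : ∀ (n : ℕ) (u v : List (α × Bool)), v.length ≤ n →
    Rdc u → Rdc v →
    ∃ p s q, u = p ++ s ∧ v = invRev s ++ q ∧ Rdc (p ++ q) ∧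
      FreeGroup.Red (u ++ v) (p ++ q) := by
  intro n
  induction n with
  | zero =>
    intro u v hn hu hv
    rw [Nat.le_zero, List.length_eq_zero_iff] at hn
    subst hn
    exact ⟨u, [], [], by simp, by simp [invRev], by simpa using hu,
      by simpa using FreeGroup.Red.refl⟩
  | succ n ih =>
  intro u v hn hu hv
  by_cases h : Rdc (u ++ v)
  · exact ⟨u, [], v, by simp, by simp [invRev], h, Relation.ReflTransGen.refl⟩
  rcases u.eq_nil_or_concat' with rfl | ⟨p', x, rfl⟩
  · exact absurd hv h
  rcases v with _ | ⟨y, v'⟩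
  · exact absurd (by simpa using hu) h
  -- junction must cancel
  have hy : y = (x.1, !x.2) := by
    rw [Rdc, List.Chain', List.isChain_append] at h
    push_neg at h
    obtain ⟨a, ha, c, hc, hac⟩ := h hu hv
    rw [List.getLast?_concat] at ha
    simp only [List.head?_cons, Option.mem_def, Option.some.injEq] at ha hc
    rw [hc, hac, ha]
  have hp' : Rdc p' := hu.prefix ⟨[x], rfl⟩
  have hv' : Rdc v' := (List.isChain_cons.mp hv).2
  obtain ⟨p, s', q, h1, h2, h3, h4⟩ := ih p' v' (by simp at hn; omega) hp' hv'
  refine ⟨p, s' ++ [x], q, by rw [h1, List.append_assoc], ?_, h3, ?_⟩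
  · rw [invRev_append, invRev_singleton, hy, h2]
    simp
  · refine Relation.ReflTransGen.head ?_ h4
    have : p' ++ [x] ++ y :: v' = p' ++ (x.1, x.2) :: (x.1, !x.2) :: v' := by
      simp [hy]
    rw [this]
    exact FreeGroup.Red.Step.not

theorem cancel (u v : List (α × Bool)) (hu : Rdc u) (hv : Rdc v) :
    ∃ p s q, u = p ++ s ∧ v = invRev s ++ q ∧ Rdc (p ++ q) ∧
      FreeGroup.Red (u ++ v) (p ++ q) :=
  cancel_aux v.length u v le_rfl hu hv

/-- Key dichotomy: equal-length reduced words whose products in both orders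
have the same reduction are equal or inverse. -/
theorem comm_dichotomy {u v : List (α × Bool)} (hu : Rdc u) (hv : Rdc v)
    (hl : u.length = v.length) (h : reduce (u ++ v) = reduce (v ++ u)) :
    u = v ∨ u = invRev v := by
  obtain ⟨p, s, q, e1, e2, r1, red1⟩ := cancel u v hu hv
  obtain ⟨p', s', q', e3, e4, r2, red2⟩ := cancel v u hv hu
  have h1 : reduce (u ++ v) = p ++ q := by
    rw [reduce.eq_of_red red1, rdc_reduce_eq r1]
  have h2 : reduce (v ++ u) = p' ++ q' := by
    rw [reduce.eq_of_red red2, rdc_reduce_eq r2]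
  have hpq : p ++ q = p' ++ q' := by rw [← h1, ← h2, h]
  have lu : u.length = p.length + s.length := by simpa using congrArg List.length e1
  have lv : v.length = s.length + q.length := by
    simpa [invRev_length] using congrArg List.length e2
  have lv' : v.length = p'.length + s'.length := by simpa using congrArg List.length e3
  have lu' : u.length = s'.length + q'.length := by
    simpa [invRev_length] using congrArg List.length e4
  have hll : p.length + q.length = p'.length + q'.length := by
    simpa using congrArg List.length hpq
  have hkk : s.length = s'.length := by omega
  have hpl : p.length = p'.length := by omega
  obtain ⟨rfl, rfl⟩ := List.append_inj hpq hpl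
  -- now : u = p ++ s, v = invRev s ++ q, v = p ++ s', u = invRev s' ++ q
  by_cases hcase : s.length ≤ p.length
  · -- u = v
    left
    have hts' : invRev s' = p.take s.length := by
      have t1 : u.take s.length = invRev s' := by
        rw [e4, List.take_left' (by rw [invRev_length, hkk])]
      have t2 : u.take s.length = p.take s.length := by
        rw [e1, List.take_append_of_le_length hcase]
      rw [← t1, t2]
    have hts : invRev s = p.take s.length := by
      have t1 : v.take s.length = invRev s := by
        rw [e2, List.take_left' (by rw [invRev_length])]
      have t2 : v.take s.length = p.take s.length := by
        rw [e3, List.take_append_of_le_length hcase]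
      rw [← t1, t2]
    have : s = s' := invRev_injective (by rw [hts, hts'])
    rw [e1, e3, this]
  · -- u = invRev v
    right
    push_neg at hcase
    -- decompose invRev s' = p ++ u₀
    have d1 : invRev s' = p ++ (invRev s').drop p.length := by
      have t1 : u.take p.length = p := by rw [e1, List.take_left' rfl]
      have t2 : u.take p.length = (invRev s').take p.length := by
        rw [e4, List.take_append_of_le_length (by rw [invRev_length, ← hkk]; omega)]
      conv_lhs => rw [← List.take_append_drop p.length (invRev s')]
      rw [← t2, t1]
    have d2 : invRev s = p ++ (invRev s).drop p.length := by
      have t1 : v.take p.length = p := by rw [e3, List.take_left' rfl]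
      have t2 : v.take p.length = (invRev s).take p.length := by
        rw [e2, List.take_append_of_le_length (by rw [invRev_length]; omega)]
      conv_lhs => rw [← List.take_append_drop p.length (invRev s)]
      rw [← t2, t1]
    set u₀ := (invRev s').drop p.length with hu₀
    set u₁ := (invRev s).drop p.length with hu₁
    have hs : s = u₀ ++ q := by
      apply List.append_cancel_left (as := p)
      rw [← e1, ← List.append_assoc, ← d1, e4]
    have hs' : s' = u₁ ++ q := by
      apply List.append_cancel_left (as := p)
      rw [← e3, ← List.append_assoc, ← d2, e2]
    have key : invRev q = p ∧ invRev u₀ = u₁ := by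
      have : invRev q ++ invRev u₀ = p ++ u₁ := by
        rw [← invRev_append, ← hs, d2]
      exact List.append_inj this (by rw [invRev_length]; omega)
    have hv_eq : v = invRev q ++ (invRev u₀ ++ q) := by
      rw [e3, hs', key.1, key.2]
    have hu_eq : u = (p ++ u₀) ++ q := by rw [e4, d1]
    have hq : invRev p = q := by rw [← key.1, invRev_invRev]
    rw [hv_eq, hu_eq, invRev_append, invRev_append, invRev_invRev, key.1, hq,
      List.append_assoc]

/-- The commutator word of two distinct, non-inverse, equal-length reduced
words does not reduce to the empty word. -/
theorem comm_ne_nil {u v : List (α × Bool)} (hu : Rdc u) (hv : Rdc v)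
    (hl : u.length = v.length) (hne : u ≠ v) (hni : u ≠ invRev v) :
    reduce (u ++ v ++ invRev u ++ invRev v) ≠ [] := by
  intro h0
  have h1 : FreeGroup.mk (u ++ v ++ invRev u ++ invRev v) = 1 := by
    rw [← reduce.self (L := u ++ v ++ invRev u ++ invRev v), h0, FreeGroup.one_eq_mk]
  have h2 : mk u * mk v * (mk u)⁻¹ * (mk v)⁻¹ = 1 := by
    rw [inv_mk, inv_mk, mul_mk, mul_mk, mul_mk]; exact h1
  have h3 : mk u * mk v * (mk u)⁻¹ * (mk v)⁻¹ * (mk v * mk u) = 1 * (mk v * mk u) := by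
    rw [h2]
  have hcomm : mk (u ++ v) = mk (v ++ u) := by
    rw [← mul_mk, ← mul_mk]
    simpa only [mul_assoc, inv_mul_cancel_left, inv_mul_cancel, mul_one, one_mul]
      using h3
  have := comm_dichotomy hu hv hl (reduce.sound hcomm)
  tauto

end WordAux


section Glue

open FreeGroup WordAux List

variable {G : MGraph}

lemma dtail_flip (d : G.Dir) : G.dtail (d.1, !d.2) = G.dhead d := by
  rcases d with ⟨e, b⟩; cases b <;> rfl

lemma dhead_flip (d : G.Dir) : G.dhead (d.1, !d.2) = G.dtail d := by
  rcases d with ⟨e, b⟩; cases b <;> rfl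

lemma nonBack_iff_rdc (w : List G.Dir) : G.NonBack w ↔ Rdc (α := G.E) w := by
  unfold MGraph.NonBack Rdc MGraph.dinv
  exact Iff.rfl

lemma isWalk_invRev {w : List G.Dir} (h : G.IsWalk w) :
    G.IsWalk (invRev (α := G.E) w) := by
  unfold MGraph.IsWalk at *
  rw [invRev, List.Chain', List.isChain_reverse, List.isChain_map]
  refine h.imp ?_
  intro a b hab
  show G.dhead (b.1, !b.2) = G.dtail (a.1, !a.2)
  rw [dhead_flip, dtail_flip, hab]

lemma wstart_invRev (w : List G.Dir) :
    G.wstart (invRev (α := G.E) w) = G.wend w := by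
  unfold MGraph.wstart MGraph.wend
  rw [invRev, List.head?_reverse, List.getLast?_map]
  cases w.getLast? with
  | none => rfl
  | some d => simp [dtail_flip]

lemma wend_invRev (w : List G.Dir) :
    G.wend (invRev (α := G.E) w) = G.wstart w := by
  unfold MGraph.wstart MGraph.wend
  rw [invRev, List.getLast?_eq_head?_reverse, List.reverse_reverse, List.head?_map]
  cases w.head? with
  | none => rfl
  | some d => simp [dhead_flip]

lemma wstart_append {u : List G.Dir} (w : List G.Dir) (h : u ≠ []) :
    G.wstart (u ++ w) = G.wstart u := by
  unfold MGraph.wstart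
  rcases u with _ | ⟨a, t⟩
  · exact absurd rfl h
  · rfl

lemma wend_append (u : List G.Dir) {w : List G.Dir} (h : w ≠ []) :
    G.wend (u ++ w) = G.wend w := by
  unfold MGraph.wend
  rw [List.getLast?_append]
  rcases w.eq_nil_or_concat' with rfl | ⟨t, c, rfl⟩
  · exact absurd rfl h
  · rw [List.getLast?_concat]; rfl

lemma isWalk_append {u w : List G.Dir} (hu : G.IsWalk u) (hw : G.IsWalk w)
    (h : G.wend u = G.wstart w) : G.IsWalk (u ++ w) := by
  unfold MGraph.IsWalk at *
  rw [List.Chain', List.isChain_append]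
  refine ⟨hu, hw, ?_⟩
  intro a ha b hb
  rw [Option.mem_def] at ha hb
  unfold MGraph.wend MGraph.wstart at h
  rw [ha, hb] at h
  simpa using h

lemma step_preserve {w w' : List G.Dir} (s : FreeGroup.Red.Step (α := G.E) w w')
    (hw : G.IsWalk w) :
    G.IsWalk w' ∧ (w' ≠ [] → (G.wstart w' = G.wstart w ∧ G.wend w' = G.wend w)) := by
  cases s with
  | @not L₁ L₂ x b =>
    unfold MGraph.IsWalk at hw
    rw [List.Chain', List.isChain_append] at hw
    obtain ⟨h1, h2, h3⟩ := hw
    rw [List.isChain_cons_cons] at h2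
    obtain ⟨hdd, h2⟩ := h2
    rw [List.isChain_cons] at h2
    obtain ⟨h4, h5⟩ := h2
    have hwalk : G.IsWalk (L₁ ++ L₂) := by
      unfold MGraph.IsWalk
      rw [List.Chain', List.isChain_append]
      refine ⟨h1, h5, ?_⟩
      intro a ha c hc
      have e1 := h3 a ha ((x, b) : G.Dir) (by simp)
      have e2 := h4 c hc
      rw [dhead_flip (G := G) ((x, b) : G.Dir)] at e2
      rw [e1, e2]
    refine ⟨hwalk, fun hne => ⟨?_, ?_⟩⟩
    · -- wstart
      rcases L₁ with _ | ⟨a, t⟩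
      · simp only [List.nil_append] at hne ⊢
        rcases L₂ with _ | ⟨c, t2⟩
        · exact absurd rfl hne
        · have e2 := h4 c (by simp)
          rw [dhead_flip (G := G) ((x, b) : G.Dir)] at e2
          unfold MGraph.wstart
          simp only [List.head?_cons, Option.map_some]
          exact congrArg some e2.symm
      · rfl
    · -- wend
      rcases L₂.eq_nil_or_concat' with rfl | ⟨t2, c, rfl⟩
      · simp only [List.append_nil] at hne ⊢
        rcases L₁.eq_nil_or_concat' with rfl | ⟨t1, a, rfl⟩
        · exact absurd rfl hne
        · have e1 := h3 a (by rw [List.getLast?_concat]; rfl) ((x, b) : G.Dir) (by simp)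
          unfold MGraph.wend
          have : (t1 ++ [a] ++ (x, b) :: (x, !b) :: ([] : List G.Dir)) =
              (t1 ++ [a] ++ [((x, b) : G.Dir)]) ++ [((x, !b) : G.Dir)] := by simp
          rw [this, List.getLast?_concat, List.getLast?_concat]
          simp [dhead_flip (G := G) ((x, b) : G.Dir), e1]
      · unfold MGraph.wend
        have e1 : (L₁ ++ (x, b) :: (x, !b) :: (t2 ++ [c])) =
            (L₁ ++ (x, b) :: (x, !b) :: t2) ++ [c] := by simp
        have e2 : L₁ ++ (t2 ++ [c]) = (L₁ ++ t2) ++ [c] := by simp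
        rw [e1, e2, List.getLast?_concat, List.getLast?_concat]

lemma red_preserve {w r : List G.Dir} (h : FreeGroup.Red (α := G.E) w r)
    (hw : G.IsWalk w) :
    G.IsWalk r ∧ (r ≠ [] → (G.wstart r = G.wstart w ∧ G.wend r = G.wend w)) := by
  induction h with
  | refl => exact ⟨hw, fun _ => ⟨rfl, rfl⟩⟩
  | @tail c r hac hstep ih =>
    obtain ⟨hwc, hc⟩ := ih
    obtain ⟨hwr, hr⟩ := step_preserve hstep hwc
    refine ⟨hwr, fun hne => ?_⟩
    have hcne : c ≠ [] := by cases hstep with | not => simp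
    obtain ⟨p1, p2⟩ := hc hcne
    obtain ⟨q1, q2⟩ := hr hne
    exact ⟨q1.trans p1, q2.trans p2⟩

lemma cnt_append (u w : List G.Dir) (d : G.Dir) :
    G.cnt (u ++ w) d = G.cnt u d + G.cnt w d := by
  simp [MGraph.cnt, List.count_append]

lemma cnt_eq_count {inst : DecidableEq G.Dir} (w : List G.Dir) (d : G.Dir) :
    G.cnt w d = @List.count _ (@instBEqOfDecidableEq _ inst) d w := by
  unfold MGraph.cnt
  rw [Subsingleton.elim (Classical.decEq G.Dir) inst]

lemma cnt_singleton_flip (c : G.Dir) (e : G.E) (b : Bool) :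
    G.cnt [((c.1, !c.2) : G.Dir)] (e, b) = G.cnt [c] (e, !b) := by
  classical
  rcases c with ⟨f, d⟩
  by_cases hef : e = f
  · subst hef
    cases d <;> cases b <;>
      simp [MGraph.cnt, List.count_cons, instBEqOfDecidableEq, decide_eq_true_eq]
  · simp [MGraph.cnt, List.count_cons, instBEqOfDecidableEq, decide_eq_true_eq,
      Prod.ext_iff, Ne.symm hef]

lemma cnt_invRev (w : List G.Dir) (e : G.E) (b : Bool) :
    G.cnt (invRev (α := G.E) w) (e, b) = G.cnt w (e, !b) := by
  induction w with
  | nil => simp [invRev, MGraph.cnt]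
  | cons c w ih =>
    have h1 : invRev (α := G.E) (c :: w) =
        invRev (α := G.E) w ++ [((c.1, !c.2) : G.Dir)] := by
      simp [invRev]
    have h2 : (c :: w : List G.Dir) = [c] ++ w := rfl
    rw [h1, cnt_append, h2, cnt_append, ih, cnt_singleton_flip]
    omega

lemma step_neutral {w w' : List G.Dir} (s : FreeGroup.Red.Step (α := G.E) w w')
    (h : G.EdgeNeutral w) : G.EdgeNeutral w' := by
  classical
  cases s with
  | @not L₁ L₂ x b =>
    intro e
    have h1 := h e
    have key : ∀ c : Bool, G.cnt (L₁ ++ (x, b) :: (x, !b) :: L₂) (e, c) =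
        G.cnt (L₁ ++ L₂) (e, c) + (if e = x then 1 else 0) := by
      intro c
      by_cases hex : e = x
      · subst hex
        cases b <;> cases c <;>
          simp [MGraph.cnt, List.count_append, List.count_cons, instBEqOfDecidableEq,
            decide_eq_true_eq, Prod.mk.injEq] <;> omega
      · simp [MGraph.cnt, List.count_append, List.count_cons, instBEqOfDecidableEq,
          decide_eq_true_eq, Prod.mk.injEq, hex, Ne.symm hex]
    rw [key true, key false] at h1
    omega

lemma red_neutral {w r : List G.Dir} (h : FreeGroup.Red (α := G.E) w r)
    (hw : G.EdgeNeutral w) : G.EdgeNeutral r := by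
  induction h with
  | refl => exact hw
  | tail hac hstep ih => exact step_neutral hstep ih

lemma neutral_W (a b : List G.Dir) :
    G.EdgeNeutral (a ++ b ++ invRev (α := G.E) a ++ invRev (α := G.E) b) := by
  intro e
  simp only [cnt_append, cnt_invRev]
  simp only [Bool.not_true, Bool.not_false]
  omega

theorem main_aux (G : MGraph) (v : G.V) (l : ℕ) (hl : 1 ≤ l) (a b : List G.Dir)
    (ha : G.IsWalk a ∧ G.NonBack a ∧ G.wstart a = some v ∧
      G.wend a = some v ∧ a.length = l)
    (hb : G.IsWalk b ∧ G.NonBack b ∧ G.wstart b = some v ∧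
      G.wend b = some v ∧ b.length = l)
    (hne : a ≠ b) (hni : a ≠ invRev (α := G.E) b) :
    G.ablGirth ≤ ((4 * l : ℕ) : ℕ∞) := by
  classical
  obtain ⟨ha1, ha2, ha3, ha4, ha5⟩ := ha
  obtain ⟨hb1, hb2, hb3, hb4, hb5⟩ := hb
  have hanil : a ≠ [] := by
    intro h; rw [h] at ha5; simp at ha5; omega
  have hbnil : b ≠ [] := by
    intro h; rw [h] at hb5; simp at hb5; omega
  have hianil : invRev (α := G.E) a ≠ [] := by
    intro h
    have := congrArg List.length h
    rw [invRev_length] at this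
    simp at this
    exact hanil this
  set W := a ++ b ++ invRev (α := G.E) a ++ invRev (α := G.E) b with hW
  set r := FreeGroup.reduce (α := G.E) W with hr
  have hred : FreeGroup.Red W r := FreeGroup.reduce.red
  -- r is nonempty
  have hrne : r ≠ [] :=
    comm_ne_nil ((nonBack_iff_rdc a).mp ha2) ((nonBack_iff_rdc b).mp hb2)
      (ha5.trans hb5.symm) hne hni
  -- W is a closed walk at v
  have hWab : G.IsWalk (a ++ b) := isWalk_append ha1 hb1 (ha4.trans hb3.symm)
  have hsab : G.wstart (a ++ b) = some v := by rw [wstart_append _ hanil, ha3]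
  have heab : G.wend (a ++ b) = some v := by rw [wend_append _ hbnil, hb4]
  have hWabi : G.IsWalk (a ++ b ++ invRev (α := G.E) a) :=
    isWalk_append hWab (isWalk_invRev ha1)
      (by rw [heab, wstart_invRev, ha4])
  have hsabi : G.wstart (a ++ b ++ invRev (α := G.E) a) = some v := by
    rw [wstart_append _ (by simp [hanil]), hsab]
  have heabi : G.wend (a ++ b ++ invRev (α := G.E) a) = some v := by
    rw [wend_append _ hianil, wend_invRev, ha3]
  have hWwalk : G.IsWalk W :=
    isWalk_append hWabi (isWalk_invRev hb1)
      (by rw [heabi, wstart_invRev, hb4])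
  have hWs : G.wstart W = some v := by
    rw [hW, wstart_append _ (by simp [hanil]), hsabi]
  have hWe : G.wend W = some v := by
    have : invRev (α := G.E) b ≠ [] := by
      intro h
      have := congrArg List.length h
      rw [invRev_length] at this
      simp at this
      exact hbnil this
    rw [hW, wend_append _ this, wend_invRev, hb3]
  obtain ⟨hrwalk, hrends⟩ := red_preserve hred hWwalk
  obtain ⟨hrs, hre⟩ := hrends hrne
  -- r is a closed non-backtracking edge-neutral walk
  have hrnb : G.NonBack r := (nonBack_iff_rdc r).mpr (rdc_reduce W)
  have hrclosed : G.Closed r := ⟨hrne, by rw [hrs, hre, hWs, hWe]⟩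
  have hrneutral : G.EdgeNeutral r := red_neutral hred (neutral_W a b)
  have hmem : ((r.length : ℕ) : ℕ∞) ∈ {n : ℕ∞ | ∃ w : List G.Dir,
      G.IsWalk w ∧ G.NonBack w ∧ G.Closed w ∧ G.EdgeNeutral w ∧ n = w.length} :=
    ⟨r, hrwalk, hrnb, hrclosed, hrneutral, rfl⟩
  have hlen : r.length ≤ 4 * l := by
    have h1 := FreeGroup.Red.length_le hred
    have h2 : W.length = 4 * l := by
      rw [hW]
      simp [List.length_append, invRev_length, ha5, hb5]
      omega
    omega
  calc G.ablGirth ≤ ((r.length : ℕ) : ℕ∞) := sInf_le hmem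
    _ ≤ ((4 * l : ℕ) : ℕ∞) := by exact_mod_cast hlen

end Glue


/-- If a graph has three pairwise distinct closed non-backtracking walks of
the same length `l` based at a common vertex, then its abelian girth is at
most `4l`. -/
theorem ablGirth_le_four_l (G : MGraph) (v : G.V) (l : ℕ)
    (w₁ w₂ w₃ : List G.Dir)
    (hw₁ : G.IsWalk w₁ ∧ G.NonBack w₁ ∧ G.wstart w₁ = some v ∧
      G.wend w₁ = some v ∧ w₁.length = l)
    (hw₂ : G.IsWalk w₂ ∧ G.NonBack w₂ ∧ G.wstart w₂ = some v ∧
      G.wend w₂ = some v ∧ w₂.length = l)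
    (hw₃ : G.IsWalk w₃ ∧ G.NonBack w₃ ∧ G.wstart w₃ = some v ∧
      G.wend w₃ = some v ∧ w₃.length = l)
    (h12 : w₁ ≠ w₂) (h13 : w₁ ≠ w₃) (h23 : w₂ ≠ w₃) :
    G.ablGirth ≤ ((4 * l : ℕ) : ℕ∞) := by
  have hl : 1 ≤ l := by
    rcases Nat.eq_zero_or_pos l with rfl | h
    · exact absurd ((List.length_eq_zero_iff.mp hw₁.2.2.2.2).trans
        (List.length_eq_zero_iff.mp hw₂.2.2.2.2).symm) h12
    · exact h
  by_cases h : w₁ = FreeGroup.invRev (α := G.E) w₂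
  · refine main_aux G v l hl w₁ w₃ hw₁ hw₃ h13 ?_
    intro heq
    exact h23 (FreeGroup.invRev_injective (h.symm.trans heq))
  · exact main_aux G v l hl w₁ w₂ hw₁ hw₂ h12 h
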